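/- Let λ, m, r, u, s, k, v, a, n be positive real numbers with akλr > amuv + knru (i.e., R₀ > 1 + R₁), and set Z̄ = aλv/(amv + knr), V̄ = kn/(av), T̄ = (akλr − amuv − knru)/(amvs + knrs). Then for every τ ≥ 0 and every real number w, the complex number y = wi is not a solution of the characteristic equation (y + m + V̄r)(v + y)(T̄ns + y(u + y + T̄s)) = (y + m)·v·(Z̄kr/v)·y·e^{−τy}; that is, the characteristic equation at the CTL-activated infection equilibrium E₂ has no pure imaginary roots for any delay τ ≥ 0. -/

import Mathlib

open Complex


private lemma aux_sq1 (m x w : ℝ) (hm : 0 < m) (hx : 0 < x) :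
    w ^ 2 + m ^ 2 < w ^ 2 + (m + x) ^ 2 := by nlinarith

private lemma aux_sq2 (v w : ℝ) : v ^ 2 ≤ v ^ 2 + w ^ 2 := by nlinarith [sq_nonneg w]

private lemma aux_sq3 (p q w : ℝ) : (q * |w|) ^ 2 ≤ (p - w ^ 2) ^ 2 + w ^ 2 * q ^ 2 := by
  rw [mul_pow, _root_.sq_abs]
  nlinarith [sq_nonneg (p - w ^ 2)]

private lemma aux_prod (A A' B C v D x : ℝ) (hA' : 0 ≤ A') (h1 : A' < A)
    (hv : 0 < v) (h2 : v ≤ B) (hD : 0 < D) (hx : 0 < x) (h3 : D * x ≤ C) :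
    A' * v * D * x < A * B * C := by
  have hApos : 0 < A := lt_of_le_of_lt hA' h1
  calc A' * v * D * x
      < A * v * D * x :=
        mul_lt_mul_of_pos_right (mul_lt_mul_of_pos_right (mul_lt_mul_of_pos_right h1 hv) hD) hx
    _ = A * v * (D * x) := by ring
    _ ≤ A * B * (D * x) :=
        mul_le_mul_of_nonneg_right (mul_le_mul_of_nonneg_left h2 hApos.le) (mul_nonneg hD.le hx.le)
    _ ≤ A * B * C := mul_le_mul_of_nonneg_left h3 (mul_nonneg hApos.le (hv.trans_le h2).le)

/-- For every delay `τ ≥ 0`, the characteristic equation at the CTL-activated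
infection equilibrium `E₂` has no pure imaginary roots. -/
theorem no_pure_imaginary_roots_E2
    (lam m r u s k v a n : ℝ)
    (hlam : 0 < lam) (hm : 0 < m) (hr : 0 < r) (hu : 0 < u) (hs : 0 < s)
    (hk : 0 < k) (hv : 0 < v) (ha : 0 < a) (hn : 0 < n)
    (hR : a * k * lam * r > a * m * u * v + k * n * r * u)
    (Zbar Vbar Tbar : ℝ)
    (hZ : Zbar = a * lam * v / (a * m * v + k * n * r))
    (hV : Vbar = k * n / (a * v))
    (hT : Tbar = (a * k * lam * r - a * m * u * v - k * n * r * u)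
                   / (a * m * v * s + k * n * r * s)) :
    ∀ τ : ℝ, 0 ≤ τ → ∀ w : ℝ,
      (w * Complex.I + (m : ℂ) + (Vbar : ℂ) * r) * ((v : ℂ) + w * Complex.I) *
          ((Tbar : ℂ) * n * s
            + w * Complex.I * ((u : ℂ) + w * Complex.I + (Tbar : ℂ) * s))
        ≠ (w * Complex.I + (m : ℂ)) * (v : ℂ) * ((Zbar : ℂ) * k * r / v)
            * (w * Complex.I) * Complex.exp (-(τ : ℂ) * (w * Complex.I)) := by
  intro τ hτ w heq
  have hden : 0 < a * m * v + k * n * r := by positivity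
  have hnum : 0 < a * k * lam * r - a * m * u * v - k * n * r * u := by linarith
  have hT' : 0 < Tbar := by rw [hT]; positivity
  have hV' : 0 < Vbar := by rw [hV]; positivity
  have hZ' : 0 < Zbar := by rw [hZ]; positivity
  have hD : 0 < Zbar * k * r / v := by positivity
  have hkey : u + Tbar * s = Zbar * k * r / v := by
    rw [hT, hZ]
    field_simp
    ring
  by_cases hw : w = 0
  · subst hw
    simp only [Complex.ofReal_zero, zero_mul, mul_zero, zero_add, add_zero] at heq
    have h0 : (m + Vbar * r) * v * (Tbar * n * s) = 0 := by exact_mod_cast heq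
    nlinarith [mul_pos (mul_pos (by nlinarith : (0:ℝ) < m + Vbar * r) hv)
      (by positivity : (0:ℝ) < Tbar * n * s)]
  · have habs := congrArg (‖·‖) heq
    simp only [norm_mul] at habs
    set A := ‖((w : ℂ) * Complex.I + (m : ℂ) + (Vbar : ℂ) * r)‖ with hA
    set A' := ‖((w : ℂ) * Complex.I + (m : ℂ))‖ with hA'
    set B := ‖((v : ℂ) + (w : ℂ) * Complex.I)‖ with hB
    set C := ‖((Tbar : ℂ) * n * s
      + (w : ℂ) * Complex.I * ((u : ℂ) + (w : ℂ) * Complex.I + (Tbar : ℂ) * s))‖ with hC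
    have hev : ‖(Complex.exp (-(τ : ℂ) * ((w : ℂ) * Complex.I)))‖ = 1 := by
      rw [Complex.norm_exp]
      simp
    have hvv : ‖(v : ℂ)‖ = v := by
      rw [Complex.norm_real, Real.norm_eq_abs, abs_of_pos hv]
    have hDv : ‖((Zbar : ℂ) * k * r / v)‖ = Zbar * k * r / v := by
      have : ((Zbar : ℂ) * k * r / v) = ((Zbar * k * r / v : ℝ) : ℂ) := by push_cast; ring
      rw [this, Complex.norm_real, Real.norm_eq_abs, abs_of_pos hD]
    rw [hev, hvv, hDv, mul_one] at habs
    simp only [Complex.norm_I, Complex.norm_real, Real.norm_eq_abs, mul_one] at habs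
    -- square computations
    have hA2 : A ^ 2 = w ^ 2 + (m + Vbar * r) ^ 2 := by
      rw [hA, Complex.sq_norm, Complex.normSq_apply]
      simp
      ring
    have hA'2 : A' ^ 2 = w ^ 2 + m ^ 2 := by
      rw [hA', Complex.sq_norm, Complex.normSq_apply]
      simp
      ring
    have hB2 : B ^ 2 = v ^ 2 + w ^ 2 := by
      rw [hB, Complex.sq_norm, Complex.normSq_apply]
      simp
      ring
    have hC2 : C ^ 2 = (Tbar * n * s - w ^ 2) ^ 2 + w ^ 2 * (u + Tbar * s) ^ 2 := by
      rw [hC, Complex.sq_norm, Complex.normSq_apply]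
      simp
      ring
    clear heq
    have hAnn : 0 ≤ A := norm_nonneg _
    have hA'nn : 0 ≤ A' := norm_nonneg _
    have hBnn : 0 ≤ B := norm_nonneg _
    have hCnn : 0 ≤ C := norm_nonneg _
    have h1 : A' < A := by
      apply lt_of_pow_lt_pow_left₀ 2 hAnn
      rw [hA2, hA'2]
      exact aux_sq1 m (Vbar * r) w hm (mul_pos hV' hr)
    have h2 : v ≤ B := by
      apply le_of_pow_le_pow_left₀ two_ne_zero hBnn
      rw [hB2]
      exact aux_sq2 v w
    have h3 : Zbar * k * r / v * |w| ≤ C := by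
      apply le_of_pow_le_pow_left₀ two_ne_zero hCnn
      rw [hC2, ← hkey]
      exact aux_sq3 (Tbar * n * s) (u + Tbar * s) w
    have hwpos : 0 < |w| := abs_pos.mpr hw
    have hlt : A' * v * (Zbar * k * r / v) * |w| < A * B * C :=
      aux_prod A A' B C v (Zbar * k * r / v) |w| hA'nn h1 hv h2 hD hwpos h3
    rw [habs] at hlt
    exact absurd hlt (lt_irrefl _)
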